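/- The projection of a point y ∈ ℝⁿ onto the probability simplex {x ∈ ℝⁿ : x ≥ 0, ∑ᵢ xᵢ = 1} (i.e., the minimizer of ½‖x − y‖² over the simplex) has the form x*ᵢ = max(yᵢ − μ*, 0) for some real number μ*. -/

import Mathlib

open scoped RealInnerProductSpace

lemma norm_sq_eq_sum' {n : ℕ} (v : EuclideanSpace ℝ (Fin n)) :
    ‖v‖^2 = ∑ k, (v k)^2 := by
  rw [EuclideanSpace.norm_eq, Real.sq_sqrt (by positivity)]
  simp [Real.norm_eq_abs, sq_abs]

lemma key_step {n : ℕ} (y xstar : EuclideanSpace ℝ (Fin n))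
    (hmem : (∀ i, 0 ≤ xstar i) ∧ ∑ i, xstar i = 1)
    (hmin : IsMinOn (fun x => (1/2) * ‖x - y‖^2)
      {x : EuclideanSpace ℝ (Fin n) | (∀ i, 0 ≤ x i) ∧ ∑ i, x i = 1} xstar)
    (i j : Fin n) (hij : i ≠ j) (hi : 0 < xstar i) :
    xstar i - y i ≤ xstar j - y j := by
  by_contra h
  push_neg at h
  set c : ℝ := (xstar i - y i) - (xstar j - y j) with hc
  have hcpos : 0 < c := by simp [hc]; linarith
  set t : ℝ := min (xstar i) (c/2) with ht
  have htpos : 0 < t := lt_min hi (by linarith)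
  have hti : t ≤ xstar i := min_le_left _ _
  have htc : t ≤ c/2 := min_le_right _ _
  set z : EuclideanSpace ℝ (Fin n) :=
    WithLp.toLp 2 (fun k => if k = i then xstar i - t else if k = j then xstar j + t else xstar k) with hz
  have hzk : ∀ k, z k = if k = i then xstar i - t else if k = j then xstar j + t else xstar k :=
    fun k => rfl
  have hzmem : z ∈ {x : EuclideanSpace ℝ (Fin n) | (∀ i, 0 ≤ x i) ∧ ∑ i, x i = 1} := by
    constructor
    · intro k
      rw [hzk k]
      by_cases hk : k = i
      · simp [hk]; linarith
      · by_cases hk' : k = j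
        · simp [hk, hk', Ne.symm hij]; have := hmem.1 j; linarith
        · simp [hk, hk']; exact hmem.1 k
    · have hpt : ∀ k, z k = xstar k + ((if k = i then -t else 0) + (if k = j then t else 0)) := by
        intro k
        rw [hzk k]
        by_cases hk : k = i
        · subst hk; simp [hij]; ring
        · by_cases hk' : k = j
          · subst hk'; simp [hk]
          · simp [hk, hk']
      calc ∑ k, z k = ∑ k, (xstar k + ((if k = i then -t else 0) + (if k = j then t else 0))) :=
            Finset.sum_congr rfl (fun k _ => hpt k)
        _ = 1 := by
            rw [Finset.sum_add_distrib, Finset.sum_add_distrib, hmem.2]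
            simp [Finset.sum_ite_eq']
  have hle := hmin hzmem
  simp only [Set.mem_setOf_eq] at hle
  have hnorm : ‖z - y‖^2 = ‖xstar - y‖^2 + 2*t*((xstar j - y j) - (xstar i - y i)) + 2*t^2 := by
    rw [norm_sq_eq_sum', norm_sq_eq_sum']
    have hpt : ∀ k, ((z - y) k)^2 = ((xstar - y) k)^2
        + ((if k = i then (xstar i - t - y i)^2 - (xstar i - y i)^2 else 0)
          + (if k = j then (xstar j + t - y j)^2 - (xstar j - y j)^2 else 0)) := by
      intro k
      have hzs : (z - y) k = z k - y k := rfl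
      have hxs : (xstar - y) k = xstar k - y k := rfl
      rw [hzs, hxs, hzk k]
      by_cases hk : k = i
      · subst hk; simp [hij]
      · by_cases hk' : k = j
        · subst hk'; simp [hk]
        · simp [hk, hk']
    calc ∑ k, ((z - y) k)^2
        = ∑ k, (((xstar - y) k)^2
          + ((if k = i then (xstar i - t - y i)^2 - (xstar i - y i)^2 else 0)
          + (if k = j then (xstar j + t - y j)^2 - (xstar j - y j)^2 else 0))) :=
          Finset.sum_congr rfl (fun k _ => hpt k)
      _ = (∑ k, ((xstar - y) k)^2) + 2*t*((xstar j - y j) - (xstar i - y i)) + 2*t^2 := by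
          rw [Finset.sum_add_distrib, Finset.sum_add_distrib]
          simp [Finset.sum_ite_eq']
          ring
  rw [hnorm] at hle
  nlinarith [htpos, htc, hcpos]

theorem simplex_projection_form (n : ℕ) (hn : 1 ≤ n)
    (y xstar : EuclideanSpace ℝ (Fin n))
    (hmem : (∀ i, 0 ≤ xstar i) ∧ ∑ i, xstar i = 1)
    (hmin : IsMinOn (fun x => (1/2) * ‖x - y‖^2)
      {x : EuclideanSpace ℝ (Fin n) | (∀ i, 0 ≤ x i) ∧ ∑ i, x i = 1} xstar) :
    ∃ μ : ℝ, ∀ i, xstar i = max (y i - μ) 0 := by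
  have hex : ∃ i0, 0 < xstar i0 := by
    by_contra hno
    push_neg at hno
    have : ∀ i, xstar i = 0 := fun i => le_antisymm (hno i) (hmem.1 i)
    have : (∑ i, xstar i) = 0 := by simp [this]
    rw [hmem.2] at this; norm_num at this
  obtain ⟨i0, hi0⟩ := hex
  refine ⟨y i0 - xstar i0, fun i => ?_⟩
  by_cases hii : i = i0
  · subst hii
    rw [max_eq_left (by linarith)]
    ring
  · rcases lt_or_eq_of_le (hmem.1 i) with hpos | hzero
    · have h1 := key_step y xstar hmem hmin i i0 hii hpos
      have h2 := key_step y xstar hmem hmin i0 i (Ne.symm hii) hi0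
      rw [max_eq_left (by linarith)]
      linarith
    · have h2 := key_step y xstar hmem hmin i0 i (Ne.symm hii) hi0
      rw [max_eq_right (by linarith)]
      linarith
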